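/- Let H be a complex Hilbert space, A a bounded linear operator on H, I ⊆ ℝ an open interval, and R : I → B(H) a differentiable map satisfying the Lyapunov equation R′(x) = −(A ∘ R(x) + R(x) ∘ A) for all x ∈ I. Suppose 1 + R(x) is invertible in B(H) for every x ∈ I and set F(x) = (1 + R(x))⁻¹. Then F is differentiable on I and F′(x) = A ∘ F(x) + F(x) ∘ A − 2·F(x) ∘ A ∘ F(x) for all x ∈ I. -/

import Mathlib

/-- If `R` solves the Lyapunov equation `R' = -(A R + R A)` on an open interval and
`F = (1 + R)⁻¹`, then `F' = A F + F A - 2 F A F` (Lemma 3.1 of the paper, equation (3.2)). -/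
theorem inverse_deriv_lyapunov
    {H : Type*} [NormedAddCommGroup H] [InnerProductSpace ℂ H] [CompleteSpace H]
    (A : H →L[ℂ] H) (I : Set ℝ) (hI : IsOpen I) (hI' : I.OrdConnected)
    (R F : ℝ → (H →L[ℂ] H))
    (hR : ∀ x ∈ I, HasDerivAt R (-(A * R x + R x * A)) x)
    (hF : ∀ x ∈ I, (1 + R x) * F x = 1 ∧ F x * (1 + R x) = 1) :
    ∀ x ∈ I, HasDerivAt F (A * F x + F x * A - 2 * (F x * A * F x)) x := by
  intro x hx
  -- units
  set u : (H →L[ℂ] H)ˣ := ⟨1 + R x, F x, (hF x hx).1, (hF x hx).2⟩ with hu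
  have huinv : (↑u⁻¹ : H →L[ℂ] H) = F x := rfl
  -- derivative of 1 + R
  have h1R : HasDerivAt (fun y => 1 + R y) (-(A * R x + R x * A)) x := by
    have := (hasDerivAt_const x (1 : H →L[ℂ] H)).add (hR x hx)
    simp only [zero_add] at this; exact this
  have hcomp : HasDerivAt (fun y => Ring.inverse (1 + R y))
      (F x * (A * R x + R x * A) * F x) x := by
    have := (hasFDerivAt_ringInverse (𝕜 := ℝ) u).comp_hasDerivAt x h1R
    refine this.congr_deriv ?_
    simp [huinv, ContinuousLinearMap.mulLeftRight_apply, mul_assoc]; noncomm_ring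
  -- F agrees with Ring.inverse (1 + R ·) near x
  have heq : F =ᶠ[nhds x] (fun y => Ring.inverse (1 + R y)) := by
    filter_upwards [hI.mem_nhds hx] with y hy
    have : IsUnit (1 + R y) := ⟨⟨1 + R y, F y, (hF y hy).1, (hF y hy).2⟩, rfl⟩
    obtain ⟨v, hv⟩ := this
    rw [← hv, Ring.inverse_unit]
    have : (1 + R y) * F y = 1 := (hF y hy).1
    rw [← hv] at this
    exact (Units.inv_eq_of_mul_eq_one_right this).symm
  have hd : HasDerivAt F (F x * (A * R x + R x * A) * F x) x :=
    hcomp.congr_of_eventuallyEq heq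
  convert hd using 1
  have h1 : R x * F x = 1 - F x := by
    have := (hF x hx).1; rw [add_mul, one_mul] at this; exact eq_sub_of_add_eq' this
  have h2 : F x * R x = 1 - F x := by
    have := (hF x hx).2; rw [mul_add, mul_one] at this; exact eq_sub_of_add_eq' this
  have : F x * (A * R x + R x * A) * F x
      = F x * A * (R x * F x) + (F x * R x) * (A * F x) := by noncomm_ring
  rw [this, h1, h2]
  noncomm_ring
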